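/- Let N ≥ 1, γ ∈ [0,1), let 𝟙 ∈ ℝ^N be the all-ones vector, and let r* ∈ ℝ^N be non-constant (not a scalar multiple of 𝟙). Then there exist row-stochastic matrices P₁, P₂ : Matrix (Fin N) (Fin N) ℝ such that every entry of (P₁ − P₂) *ᵥ ((I − γ·P₁)⁻¹ *ᵥ r*) is nonnegative, and { r ∈ ℝ^N : every entry of (P₁ − P₂) *ᵥ ((I − γ·P₁)⁻¹ *ᵥ r) is nonnegative } = { λ₁·r* + λ₂·𝟙 : λ₁ ≥ 0, λ₂ ∈ ℝ }. That is, the set of reward vectors feasible under the constructed pair of transition matrices is exactly the set of positive affine transformations of r*. -/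

import Mathlib

open Matrix

lemma exists_basis_pair (N : ℕ) (hN : 1 ≤ N) (rstar : Fin N → ℝ)
    (hr : ¬∃ c : ℝ, rstar = c • (1 : Fin N → ℝ)) :
    ∃ (b : Module.Basis (Fin N) ℝ (Fin N → ℝ)) (i0 i1 : Fin N),
      i0 ≠ i1 ∧ b i0 = rstar ∧ b i1 = (1 : Fin N → ℝ) := by
  classical
  have hone : (1 : Fin N → ℝ) ≠ 0 := by
    intro h
    have := congrFun h ⟨0, hN⟩
    simp at this
  have hrne : rstar ≠ (1 : Fin N → ℝ) := by
    intro h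
    exact hr ⟨1, by simpa using h⟩
  have li : LinearIndependent ℝ ![rstar, (1 : Fin N → ℝ)] := by
    rw [LinearIndependent.pair_iff]
    intro s t hst
    by_cases hs : s = 0
    · subst hs
      simp only [zero_smul, zero_add] at hst
      refine ⟨rfl, ?_⟩
      by_contra ht
      exact hone (by
        have := smul_eq_zero.mp hst
        tauto)
    · exfalso
      apply hr
      refine ⟨-t / s, ?_⟩
      have : s • rstar = (-t) • (1 : Fin N → ℝ) := by
        rw [neg_smul]
        linear_combination (norm := module) hst
      funext j
      have := congrFun this j
      simp only [Pi.smul_apply, smul_eq_mul, Pi.one_apply, mul_one] at this ⊢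
      field_simp
      linarith [this]
  have hrange : Set.range ![rstar, (1 : Fin N → ℝ)] = {rstar, (1 : Fin N → ℝ)} := by
    ext x
    simp only [Set.mem_range, Set.mem_insert_iff, Set.mem_singleton_iff]
    constructor
    · rintro ⟨i, rfl⟩
      fin_cases i <;> simp
    · rintro (rfl | rfl)
      · exact ⟨0, rfl⟩
      · exact ⟨1, rfl⟩
  have hs : LinearIndepOn ℝ id ({rstar, (1 : Fin N → ℝ)} : Set (Fin N → ℝ)) := by
    have := li.linearIndepOn_id
    rwa [hrange] at this
  let b0 := Module.Basis.extend hs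
  haveI : Fintype ↥(hs.extend (Set.subset_univ _)) := FiniteDimensional.fintypeBasisIndex b0
  have hcard : Fintype.card ↥(hs.extend (Set.subset_univ _)) = N := by
    have := Module.finrank_eq_card_basis b0
    rw [Module.finrank_fin_fun] at this
    omega
  let e := Fintype.equivFinOfCardEq hcard
  have hmem0 : rstar ∈ hs.extend (Set.subset_univ _) :=
    hs.subset_extend _ (by simp)
  have hmem1 : (1 : Fin N → ℝ) ∈ hs.extend (Set.subset_univ _) :=
    hs.subset_extend _ (by simp)
  refine ⟨b0.reindex e, e ⟨rstar, hmem0⟩, e ⟨(1 : Fin N → ℝ), hmem1⟩, ?_, ?_, ?_⟩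
  · intro h
    exact hrne (congrArg Subtype.val (e.injective h))
  · rw [Module.Basis.reindex_apply, Equiv.symm_apply_apply, Module.Basis.extend_apply_self]
  · rw [Module.Basis.reindex_apply, Equiv.symm_apply_apply, Module.Basis.extend_apply_self]

theorem exists_kernels_feasible_set_eq_affine
    (N : ℕ) (hN : 1 ≤ N) (γ : ℝ) (hγ0 : 0 ≤ γ) (hγ1 : γ < 1)
    (rstar : Fin N → ℝ)
    (hr : ¬∃ c : ℝ, rstar = c • (1 : Fin N → ℝ)) :
    ∃ P₁ P₂ : Matrix (Fin N) (Fin N) ℝ,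
      ((∀ i j, 0 ≤ P₁ i j) ∧ ∀ i, ∑ j, P₁ i j = 1) ∧
      ((∀ i j, 0 ≤ P₂ i j) ∧ ∀ i, ∑ j, P₂ i j = 1) ∧
      (∀ s, 0 ≤ ((P₁ - P₂) *ᵥ ((1 - γ • P₁)⁻¹ *ᵥ rstar)) s) ∧
      {r : Fin N → ℝ | ∀ s, 0 ≤ ((P₁ - P₂) *ᵥ ((1 - γ • P₁)⁻¹ *ᵥ r)) s} =
        {r : Fin N → ℝ |
          ∃ l1 l2 : ℝ, 0 ≤ l1 ∧ r = l1 • rstar + l2 • (1 : Fin N → ℝ)} := by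
  classical
  obtain ⟨b, i0, i1, hne, hb0, hb1⟩ := exists_basis_pair N hN rstar hr
  set ε : Fin N → ((Fin N → ℝ) →ₗ[ℝ] ℝ) := fun i => b.coord i with hε
  have hεr : ∀ j, ε j rstar = if j = i0 then 1 else 0 := by
    intro j
    rw [← hb0]
    simp only [hε, Module.Basis.coord_apply, Module.Basis.repr_self, Finsupp.single_apply]
    by_cases h : i0 = j
    · simp [h]
    · rw [if_neg h, if_neg (Ne.symm h)]
  have hε1 : ∀ j, ε j (1 : Fin N → ℝ) = if j = i1 then 1 else 0 := by
    intro j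
    rw [← hb1]
    simp only [hε, Module.Basis.coord_apply, Module.Basis.repr_self, Finsupp.single_apply]
    by_cases h : i1 = j
    · simp [h]
    · rw [if_neg h, if_neg (Ne.symm h)]
  set D : Finset (Fin N) := Finset.univ \ {i0, i1} with hD
  set H : Fin N → ((Fin N → ℝ) →ₗ[ℝ] ℝ) := fun i =>
    if i = i0 then -ε i0 else if i = i1 then -(∑ j ∈ D, ε j) else ε i with hHdef
  have hDmem : ∀ j, j ∈ D ↔ (j ≠ i0 ∧ j ≠ i1) := by
    intro j; simp [hD]
  have hHi0 : H i0 = -ε i0 := by simp [hHdef]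
  have hHi1 : H i1 = -(∑ j ∈ D, ε j) := by simp [hHdef, Ne.symm hne]
  have hHD : ∀ i, i ≠ i0 → i ≠ i1 → H i = ε i := by
    intro i h h'
    simp [hHdef, h, h']
  have hsumapp : ∀ v : Fin N → ℝ, (∑ j ∈ D, ε j) v = ∑ j ∈ D, ε j v := by
    intro v
    simp [LinearMap.coe_sum, Finset.sum_apply]
  -- H applied to 1 is zero
  have hH1 : ∀ i, H i (1 : Fin N → ℝ) = 0 := by
    intro i
    by_cases h : i = i0
    · subst h
      rw [hHi0, LinearMap.neg_apply, hε1, if_neg hne, neg_zero]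
    · by_cases h' : i = i1
      · subst h'
        rw [hHi1, LinearMap.neg_apply, hsumapp, neg_eq_zero]
        apply Finset.sum_eq_zero
        intro j hj
        rw [hε1 j, if_neg ((hDmem j).mp hj).2]
      · rw [hHD i h h', hε1, if_neg h']
  -- H applied to rstar is nonpositive
  have hHrs : ∀ i, H i rstar ≤ 0 := by
    intro i
    by_cases h : i = i0
    · subst h
      rw [hHi0, LinearMap.neg_apply, hεr, if_pos rfl]
      norm_num
    · by_cases h' : i = i1
      · subst h'
        rw [hHi1, LinearMap.neg_apply, hsumapp]
        have : ∑ j ∈ D, (ε j) rstar = 0 := by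
          apply Finset.sum_eq_zero
          intro j hj
          rw [hεr j, if_neg ((hDmem j).mp hj).1]
        rw [this, neg_zero]
      · rw [hHD i h h', hεr, if_neg h]
  -- main equivalence
  have hiff : ∀ r : Fin N → ℝ, (∀ i, H i r ≤ 0) ↔
      ∃ l1 l2 : ℝ, 0 ≤ l1 ∧ r = l1 • rstar + l2 • (1 : Fin N → ℝ) := by
    intro r
    constructor
    · intro hall
      have h0 : 0 ≤ ε i0 r := by
        have := hall i0
        rw [hHi0, LinearMap.neg_apply] at this
        linarith
      have hDle : ∀ j ∈ D, ε j r ≤ 0 := by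
        intro j hj
        have hj' := (hDmem j).mp hj
        have := hall j
        rwa [hHD j hj'.1 hj'.2] at this
      have hDsum : 0 ≤ ∑ j ∈ D, ε j r := by
        have := hall i1
        rw [hHi1, LinearMap.neg_apply, hsumapp] at this
        linarith
      have hDzero : ∀ j ∈ D, ε j r = 0 := by
        have hle : ∑ j ∈ D, ε j r ≤ 0 := Finset.sum_nonpos hDle
        have heq : ∑ j ∈ D, ε j r = 0 := le_antisymm hle hDsum
        exact (Finset.sum_eq_zero_iff_of_nonpos hDle).mp heq
      refine ⟨b.repr r i0, b.repr r i1, ?_, ?_⟩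
      · simpa [hε, Module.Basis.coord_apply] using h0
      · have hrepr : r = ∑ j, b.repr r j • b j := (b.sum_repr r).symm
        have hsub : ({i0, i1} : Finset (Fin N)) ⊆ Finset.univ := Finset.subset_univ _
        have hzero : ∀ x ∈ Finset.univ, x ∉ ({i0, i1} : Finset (Fin N)) →
            b.repr r x • b x = 0 := by
          intro x _ hx
          have hx' : x ∈ D := by
            rw [hDmem]
            simp only [Finset.mem_insert, Finset.mem_singleton] at hx
            push_neg at hx
            exact hx
          have : ε x r = 0 := hDzero x hx'
          rw [hε] at this
          simp only [Module.Basis.coord_apply] at this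
          rw [this, zero_smul]
        conv_lhs => rw [hrepr]
        rw [← Finset.sum_subset hsub hzero, Finset.sum_pair hne, hb0, hb1]
    · rintro ⟨l1, l2, hl1, rfl⟩
      have hval : ∀ j, ε j (l1 • rstar + l2 • (1 : Fin N → ℝ)) =
          l1 * (if j = i0 then 1 else 0) + l2 * (if j = i1 then 1 else 0) := by
        intro j
        rw [map_add, _root_.map_smul, _root_.map_smul, hεr, hε1, smul_eq_mul, smul_eq_mul]
      intro i
      by_cases h : i = i0
      · subst h
        rw [hHi0, LinearMap.neg_apply, hval, if_pos rfl, if_neg hne]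
        nlinarith
      · by_cases h' : i = i1
        · subst h'
          rw [hHi1, LinearMap.neg_apply, hsumapp]
          have : ∑ j ∈ D, (ε j) (l1 • rstar + l2 • (1 : Fin N → ℝ)) = 0 := by
            apply Finset.sum_eq_zero
            intro j hj
            have hj' := (hDmem j).mp hj
            rw [hval, if_neg hj'.1, if_neg hj'.2]
            ring
          rw [this, neg_zero]
        · rw [hHD i h h', hval, if_neg h, if_neg h']
          simp
  -- matrix construction
  have hNpos : (0:ℝ) < (N:ℝ) := by exact_mod_cast hN
  have hNne : (N:ℝ) ≠ 0 := ne_of_gt hNpos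
  obtain ⟨P₁, hP₁⟩ : ∃ P : Matrix (Fin N) (Fin N) ℝ, P = Matrix.of (fun _ _ => (N:ℝ)⁻¹) := ⟨_, rfl⟩
  obtain ⟨g, hg⟩ : ∃ g' : Fin N → Fin N → ℝ, g' = fun s j => H s (Pi.single j 1) := ⟨_, rfl⟩
  obtain ⟨G, hG⟩ : ∃ G' : ℝ, G' = ∑ s, ∑ j, |g s j| := ⟨_, rfl⟩
  have hG0 : 0 ≤ G := by
    rw [hG]
    exact Finset.sum_nonneg fun s _ => Finset.sum_nonneg fun j _ => abs_nonneg _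
  obtain ⟨c, hc⟩ : ∃ c' : ℝ, c' = ((N:ℝ) * (G + 1))⁻¹ := ⟨_, rfl⟩
  have hcpos : 0 < c := by
    rw [hc]
    positivity
  obtain ⟨P₂, hP₂⟩ : ∃ P : Matrix (Fin N) (Fin N) ℝ,
      P = Matrix.of (fun s j => (N:ℝ)⁻¹ + c * g s j) := ⟨_, rfl⟩
  -- expansion of H in terms of g
  have hHexp : ∀ (s : Fin N) (r : Fin N → ℝ), H s r = ∑ j, r j * g s j := by
    intro s r
    conv_lhs => rw [← Finset.univ_sum_single r]
    rw [map_sum]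
    apply Finset.sum_congr rfl
    intro j _
    have hsingle : Pi.single j (r j) = r j • (Pi.single j 1 : Fin N → ℝ) := by
      ext k
      by_cases h : k = j <;> simp [Pi.single_apply, h]
    rw [hsingle, _root_.map_smul, smul_eq_mul, hg]
    
  -- row sums of g vanish
  have hgsum : ∀ s, ∑ j, g s j = 0 := by
    intro s
    have := hHexp s (1 : Fin N → ℝ)
    rw [hH1 s] at this
    simp only [Pi.one_apply, one_mul] at this
    linarith [this]
  -- row sums
  have hP1row : ∀ i, ∑ j, P₁ i j = 1 := by
    intro i
    simp [hP₁, Finset.sum_const, Finset.card_univ, mul_comm, hNne]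
  have hP2row : ∀ s, ∑ j, P₂ s j = 1 := by
    intro s
    simp only [hP₂, Matrix.of_apply, Finset.sum_add_distrib, ← Finset.mul_sum, hgsum s, mul_zero,
      add_zero, Finset.sum_const, Finset.card_univ, Fintype.card_fin, nsmul_eq_mul]
    field_simp
  -- nonnegativity of P₂
  have hP2nn : ∀ s j, 0 ≤ P₂ s j := by
    intro s j
    have habs : |g s j| ≤ G := by
      calc |g s j| ≤ ∑ j', |g s j'| :=
            Finset.single_le_sum (f := fun j' => |g s j'|)
              (fun j' _ => abs_nonneg _) (Finset.mem_univ j)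
        _ ≤ G := by
            rw [hG]
            exact Finset.single_le_sum (f := fun s' => ∑ j', |g s' j'|)
              (fun s' _ => Finset.sum_nonneg fun j' _ => abs_nonneg _) (Finset.mem_univ s)
    have hge : -G ≤ g s j := neg_le_of_abs_le habs
    have hG1 : (0:ℝ) < G + 1 := by linarith
    have hcG : c * G ≤ (N:ℝ)⁻¹ := by
      rw [hc, mul_inv]
      have h2 : (G+1)⁻¹ * G ≤ 1 := by
        rw [inv_mul_le_iff₀ hG1]
        linarith
      calc (N:ℝ)⁻¹ * (G+1)⁻¹ * G = (N:ℝ)⁻¹ * ((G+1)⁻¹ * G) := by ring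
        _ ≤ (N:ℝ)⁻¹ * 1 := by
            apply mul_le_mul_of_nonneg_left h2 (by positivity)
        _ = (N:ℝ)⁻¹ := mul_one _
    have hmul : c * (-G) ≤ c * g s j := mul_le_mul_of_nonneg_left hge hcpos.le
    have : (0:ℝ) ≤ (N:ℝ)⁻¹ + c * g s j := by linarith
    simpa only [hP₂, Matrix.of_apply] using this
  -- P₁ algebra
  have hP1sq : P₁ * P₁ = P₁ := by
    ext i j
    simp [hP₁, Matrix.mul_apply, Finset.sum_const, Finset.card_univ, Fintype.card_fin,
      nsmul_eq_mul]
    field_simp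
  have h1γ : (0:ℝ) < 1 - γ := by linarith
  obtain ⟨δ, hδ⟩ : ∃ d : ℝ, d = γ / (1 - γ) := ⟨_, rfl⟩
  have hδeq : γ + γ * δ = δ := by
    rw [hδ]
    field_simp
    ring
  have hinv : (1 - γ • P₁)⁻¹ = 1 + δ • P₁ := by
    apply inv_eq_right_inv
    rw [sub_mul, one_mul, mul_add, mul_one, Matrix.smul_mul, Matrix.mul_smul, hP1sq, smul_smul]
    rw [sub_eq_iff_eq_add]
    rw [show γ • P₁ + (γ * δ) • P₁ = (γ + γ * δ) • P₁ by rw [add_smul]]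
    rw [hδeq]
  have hzeroM : (P₁ - P₂) * P₁ = 0 := by
    ext i j
    have hstep : ∑ k, (P₁ i k - P₂ i k) * P₁ k j = (∑ k, (P₁ i k - P₂ i k)) * (N:ℝ)⁻¹ := by
      rw [Finset.sum_mul]
      apply Finset.sum_congr rfl
      intro k _
      rw [hP₁]
      rfl
    simp only [Matrix.mul_apply, Matrix.sub_apply, Matrix.zero_apply]
    rw [hstep, Finset.sum_sub_distrib, hP1row i, hP2row i]
    ring
  have hkey : ∀ (r : Fin N → ℝ) (s : Fin N),
      ((P₁ - P₂) *ᵥ ((1 - γ • P₁)⁻¹ *ᵥ r)) s = -(c * H s r) := by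
    intro r s
    rw [hinv, mulVec_mulVec]
    have hMM : (P₁ - P₂) * (1 + δ • P₁) = P₁ - P₂ := by
      rw [mul_add, mul_one, Matrix.mul_smul, hzeroM, smul_zero, add_zero]
    rw [hMM]
    have hentry : ∀ j, (P₁ - P₂) s j * r j = -(c * (r j * g s j)) := by
      intro j
      simp only [Matrix.sub_apply, hP₁, hP₂, Matrix.of_apply]
      ring
    simp only [Matrix.mulVec, dotProduct]
    rw [Finset.sum_congr rfl (fun j _ => hentry j)]
    rw [Finset.sum_neg_distrib, ← Finset.mul_sum, ← hHexp]
  refine ⟨P₁, P₂, ⟨fun i j => by simp only [hP₁, Matrix.of_apply]; positivity, hP1row⟩,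
    ⟨hP2nn, hP2row⟩, ?_, ?_⟩
  · intro s
    rw [hkey, ← mul_neg]
    exact mul_nonneg hcpos.le (neg_nonneg.mpr (hHrs s))
  · ext r
    simp only [Set.mem_setOf_eq]
    rw [← hiff r]
    apply forall_congr'
    intro s
    rw [hkey, neg_nonneg]
    constructor
    · intro h
      exact (mul_le_mul_iff_right₀ hcpos).mp (h.trans_eq (mul_zero c).symm)
    · intro h
      have := (mul_le_mul_iff_right₀ hcpos).mpr h
      simpa using this
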